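/- Let r₀ > 0, α > 2. With the modified nearest-neighbor PDF f̃(r) = (2πr/e^{−πr₀²})·e^{−πr²} on [r₀, ∞), we have ∫_{r₀}^∞ ln(r) f̃(r) dr = −(e^{πr₀²}/2)·(Ei(−πr₀²) − 2 e^{−πr₀²} ln r₀), where Ei is the exponential integral. Consequently E[ln L(r)] = ln β + (α/2) e^{πr₀²}(Ei(−πr₀²) − 2e^{−πr₀²} ln r₀) for L(r) = β r^{−α}. -/

import Mathlib

open Real MeasureTheory Set Filter Topology

/-- Exponential integral `Ei(x) = −∫_{−x}^∞ e^{−t}/t dt`. -/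
noncomputable def expInt (x : ℝ) : ℝ :=
  -∫ t in Set.Ioi (-x), Real.exp (-t) / t


lemma intOn_exp_div {c : ℝ} (hc : 0 < c) :
    IntegrableOn (fun t : ℝ => Real.exp (-t) / t) (Set.Ioi c) := by
  have h1 : IntegrableOn (fun t : ℝ => Real.exp (-t) / c) (Set.Ioi c) := by
    have := (exp_neg_integrableOn_Ioi c zero_lt_one).div_const c
    simp only [neg_mul, one_mul] at this
    exact this
  refine h1.mono' ?_ ?_
  · exact ((Real.continuous_exp.comp continuous_neg).continuousOn.div continuousOn_id
      (fun t ht => ne_of_gt (hc.trans ht))).aestronglyMeasurable measurableSet_Ioi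
  · filter_upwards [ae_restrict_mem measurableSet_Ioi] with t ht
    rw [Real.norm_eq_abs, abs_div, abs_of_nonneg (Real.exp_pos _).le,
      abs_of_pos (hc.trans ht)]
    gcongr
    exact le_of_lt ht

lemma tail_split {c x : ℝ} (hc : 0 < c) (hx : c ≤ x) :
    (∫ t in Set.Ioi c, Real.exp (-t) / t)
      = (∫ t in c..x, Real.exp (-t) / t) + ∫ t in Set.Ioi x, Real.exp (-t) / t := by
  rw [intervalIntegral.integral_of_le hx, ← Set.Ioc_union_Ioi_eq_Ioi hx,
    setIntegral_union (Set.Ioc_disjoint_Ioi le_rfl) measurableSet_Ioi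
      ((intOn_exp_div hc).mono_set Set.Ioc_subset_Ioi_self)
      ((intOn_exp_div hc).mono_set (Set.Ioi_subset_Ioi hx))]

lemma tail_tendsto {c : ℝ} (hc : 0 < c) :
    Tendsto (fun x => ∫ t in Set.Ioi x, Real.exp (-t) / t) atTop (𝓝 0) := by
  have h1 := intervalIntegral_tendsto_integral_Ioi c (intOn_exp_div hc) (tendsto_id (α := ℝ))
  have h2 : Tendsto (fun x => (∫ t in Set.Ioi c, Real.exp (-t) / t)
      - ∫ t in c..x, Real.exp (-t) / t) atTop
      (𝓝 ((∫ t in Set.Ioi c, Real.exp (-t) / t) - ∫ t in Set.Ioi c, Real.exp (-t) / t)) :=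
    tendsto_const_nhds.sub h1
  rw [sub_self] at h2
  refine h2.congr' ?_
  filter_upwards [eventually_ge_atTop c] with x hx
  rw [tail_split hc hx]; ring


lemma intg1 (r₀ : ℝ) :
    IntegrableOn (fun r : ℝ => 2 * π * r * Real.exp (-(π * r ^ 2))) (Set.Ioi r₀) := by
  have := (integrable_mul_exp_neg_mul_sq (b := π) pi_pos).const_mul (2 * π)
  exact (this.congr (ae_of_all _ fun x => by simp only; ring_nf)).integrableOn

lemma intg2 {r₀ : ℝ} (hr₀ : 0 < r₀) :
    IntegrableOn (fun r : ℝ => Real.log r * (2 * π * r * Real.exp (-(π * r ^ 2))))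
      (Set.Ioi r₀) := by
  have hg : IntegrableOn
      (fun r : ℝ => 2 * π * (|Real.log r₀| * (r * Real.exp (-(π * r ^ 2)))
        + r ^ 2 * Real.exp (-(π * r ^ 2)))) (Set.Ioi r₀) := by
    have h1 := (integrable_mul_exp_neg_mul_sq (b := π) pi_pos).const_mul |Real.log r₀|
    have h2 : Integrable (fun x : ℝ => x ^ 2 * Real.exp (-(π * x ^ 2))) := by
      have := integrable_rpow_mul_exp_neg_mul_sq (b := π) pi_pos (s := 2) (by norm_num)
      refine this.congr (ae_of_all _ fun x => ?_)
      simp only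
      rw [show ((2:ℝ)) = ((2:ℕ):ℝ) by norm_num, Real.rpow_natCast]
      ring_nf
    exact (((h1.add h2).const_mul (2 * π)).congr
      (ae_of_all _ fun x => by simp only [Pi.add_apply]; ring_nf)).integrableOn
  refine hg.mono' ?_ ?_
  · refine ((Real.continuousOn_log.mono ?_).mul (by fun_prop)).aestronglyMeasurable
      measurableSet_Ioi
    intro x hx; exact ne_of_gt (hr₀.trans hx)
  · filter_upwards [ae_restrict_mem measurableSet_Ioi] with r hr
    have hrpos : 0 < r := hr₀.trans hr
    have hlog : |Real.log r| ≤ |Real.log r₀| + r := by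
      rcases le_or_gt r 1 with h | h
      · rw [abs_of_nonpos (Real.log_nonpos hrpos.le h)]
        have h1 : Real.log r₀ ≤ Real.log r := Real.log_le_log hr₀ hr.le
        have h2 : Real.log r₀ ≤ |Real.log r₀| := le_abs_self _
        linarith [neg_le_abs (Real.log r₀)]
      · rw [abs_of_nonneg (Real.log_nonneg h.le)]
        have := Real.log_le_sub_one_of_pos hrpos
        linarith [abs_nonneg (Real.log r₀)]
    have hb : ‖Real.log r * (2 * π * r * Real.exp (-(π * r ^ 2)))‖
        ≤ (|Real.log r₀| + r) * (2 * π * r * Real.exp (-(π * r ^ 2))) := by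
      rw [norm_mul, Real.norm_eq_abs, Real.norm_eq_abs,
        abs_of_nonneg (by positivity : (0:ℝ) ≤ 2 * π * r * Real.exp (-(π * r ^ 2)))]
      exact mul_le_mul_of_nonneg_right hlog (by positivity)
    refine hb.trans (le_of_eq ?_)
    ring

lemma hasDerivF {b : ℝ} (hb : 0 < b) {r : ℝ} (hr : b < r) :
    HasDerivAt (fun u : ℝ => -(Real.log u * Real.exp (-(π * u ^ 2)))
        - (1/2) * ∫ t in Set.Ioi (π * u ^ 2), Real.exp (-t) / t)
      (Real.log r * (2 * π * r * Real.exp (-(π * r ^ 2)))) r := by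
  have hrpos : 0 < r := hb.trans hr
  have hc : 0 < π * b ^ 2 := by positivity
  set c := π * b ^ 2 with hc_def
  have hcr : c < π * r ^ 2 := by
    rw [hc_def]
    exact mul_lt_mul_of_pos_left (by nlinarith) pi_pos
  have hG : HasDerivAt (fun u : ℝ => -(Real.log u * Real.exp (-(π * u ^ 2)))
        - (1/2) * ((∫ t in Set.Ioi c, Real.exp (-t) / t)
            - ∫ t in c..(π * u ^ 2), Real.exp (-t) / t))
      (Real.log r * (2 * π * r * Real.exp (-(π * r ^ 2)))) r := by
    have hinner : HasDerivAt (fun u : ℝ => π * u ^ 2) (2 * π * r) r := by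
      have := (hasDerivAt_pow 2 r).const_mul π
      exact this.congr_deriv (by simp only [Nat.reduceSub, pow_one, Nat.cast_ofNat]; ring)
    have hH : HasDerivAt (fun x : ℝ => ∫ t in c..x, Real.exp (-t) / t)
        (Real.exp (-(π * r ^ 2)) / (π * r ^ 2)) (π * r ^ 2) := by
      have hcont : ∀ x ∈ Set.Ioi (0:ℝ), ContinuousAt (fun t : ℝ => Real.exp (-t) / t) x :=
        fun x hx => (Real.continuous_exp.comp continuous_neg).continuousAt.div
          continuousAt_id (ne_of_gt hx)
      have hii : IntervalIntegrable (fun t : ℝ => Real.exp (-t) / t) volume c (π * r ^ 2) := by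
        rw [intervalIntegrable_iff_integrableOn_Ioc_of_le hcr.le]
        exact (intOn_exp_div hc).mono_set Set.Ioc_subset_Ioi_self
      exact intervalIntegral.integral_hasDerivAt_right hii
        (ContinuousAt.stronglyMeasurableAtFilter isOpen_Ioi hcont _ (Set.mem_Ioi.mpr (by positivity)))
        (hcont _ (Set.mem_Ioi.mpr (by positivity)))
    have hcomp := hH.comp r hinner
    have hlogexp : HasDerivAt (fun u : ℝ => Real.log u * Real.exp (-(π * u ^ 2)))
        (1 / r * Real.exp (-(π * r ^ 2)) + Real.log r * (Real.exp (-(π * r ^ 2)) * (-(2 * π * r)))) r := by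
      have h1 : HasDerivAt Real.log (1 / r) r := by
        simpa [one_div] using Real.hasDerivAt_log (ne_of_gt hrpos)
      have h2 : HasDerivAt (fun u : ℝ => Real.exp (-(π * u ^ 2)))
          (Real.exp (-(π * r ^ 2)) * (-(2 * π * r))) r := hinner.neg.exp
      exact h1.mul h2
    have := hlogexp.neg.sub ((hcomp.const_sub (∫ t in Set.Ioi c, Real.exp (-t) / t)).const_mul (1/2 : ℝ))
    refine this.congr_deriv ?_
    have hππ : π * r ^ 2 ≠ 0 := by positivity
    field_simp
    ring
  refine hG.congr_of_eventuallyEq ?_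
  filter_upwards [eventually_gt_nhds hr] with u hu
  have hcu : c ≤ π * u ^ 2 := by
    rw [hc_def]
    exact mul_le_mul_of_nonneg_left (by nlinarith) pi_pos.le
  rw [tail_split hc hcu]; ring


lemma tendsto_log_mul_exp :
    Tendsto (fun r : ℝ => Real.log r * Real.exp (-(π * r ^ 2))) atTop (𝓝 0) := by
  apply squeeze_zero_norm' (a := fun r : ℝ => r ^ 1 * Real.exp (-r)) ?_
    (tendsto_pow_mul_exp_neg_atTop_nhds_zero 1)
  filter_upwards [eventually_ge_atTop (1:ℝ)] with r hr
  have hr0 : (0:ℝ) < r := lt_of_lt_of_le zero_lt_one hr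
  have h1 : Real.log r ≤ r := (Real.log_le_sub_one_of_pos hr0).trans (by linarith)
  have h2 : Real.exp (-(π * r ^ 2)) ≤ Real.exp (-r) := by
    apply Real.exp_le_exp.mpr
    nlinarith [Real.pi_gt_three]
  rw [Real.norm_eq_abs, abs_mul, abs_of_nonneg (Real.exp_pos _).le,
    abs_of_nonneg (Real.log_nonneg hr), pow_one]
  have := mul_le_mul h1 h2 (Real.exp_pos _).le hr0.le
  linarith

lemma tendsto_exp_neg_pi_sq :
    Tendsto (fun r : ℝ => Real.exp (-(π * r ^ 2))) atTop (𝓝 0) := by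
  apply squeeze_zero_norm' (a := fun r : ℝ => Real.exp (-r)) ?_ (Real.tendsto_exp_neg_atTop_nhds_zero)
  filter_upwards [eventually_ge_atTop (1:ℝ)] with r hr
  rw [Real.norm_eq_abs, abs_of_nonneg (Real.exp_pos _).le]
  apply Real.exp_le_exp.mpr
  nlinarith [Real.pi_gt_three]

lemma tendsto_pi_sq_atTop : Tendsto (fun r : ℝ => π * r ^ 2) atTop atTop := by
  exact (tendsto_pow_atTop (two_ne_zero)).const_mul_atTop pi_pos

lemma aux_log {r₀ : ℝ} (hr₀ : 0 < r₀) :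
    (∫ r in Set.Ioi r₀, Real.log r * (2 * π * r * Real.exp (-(π * r ^ 2))))
      = (1/2) * (∫ t in Set.Ioi (π * r₀ ^ 2), Real.exp (-t) / t)
        + Real.exp (-(π * r₀ ^ 2)) * Real.log r₀ := by
  have hb : 0 < r₀ / 2 := by linarith
  have key := integral_Ioi_of_hasDerivAt_of_tendsto
    (f := fun u : ℝ => -(Real.log u * Real.exp (-(π * u ^ 2)))
        - (1/2) * ∫ t in Set.Ioi (π * u ^ 2), Real.exp (-t) / t)
    (f' := fun r : ℝ => Real.log r * (2 * π * r * Real.exp (-(π * r ^ 2))))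
    (a := r₀) (m := 0)
    ((hasDerivF hb (by linarith : r₀ / 2 < r₀)).continuousAt.continuousWithinAt)
    (fun x hx => hasDerivF hb (by exact lt_trans (by linarith) hx))
    (intg2 hr₀) ?_
  · rw [key]; ring
  · have h1 : Tendsto (fun u : ℝ => -(Real.log u * Real.exp (-(π * u ^ 2)))) atTop (𝓝 (-0)) :=
      tendsto_log_mul_exp.neg
    have h2 : Tendsto (fun u : ℝ => (1/2 : ℝ) * ∫ t in Set.Ioi (π * u ^ 2), Real.exp (-t) / t)
        atTop (𝓝 ((1/2) * 0)) :=
      (((tail_tendsto (by positivity : (0:ℝ) < π * 1 ^ 2)).comp tendsto_pi_sq_atTop)).const_mul _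
    have := h1.sub h2
    simpa using this

lemma aux_norm {r₀ : ℝ} (hr₀ : 0 < r₀) :
    (∫ r in Set.Ioi r₀, 2 * π * r * Real.exp (-(π * r ^ 2)))
      = Real.exp (-(π * r₀ ^ 2)) := by
  have hD : ∀ r : ℝ, HasDerivAt (fun u : ℝ => -Real.exp (-(π * u ^ 2)))
      (2 * π * r * Real.exp (-(π * r ^ 2))) r := by
    intro r
    have hinner : HasDerivAt (fun u : ℝ => -(π * u ^ 2)) (-(2 * π * r)) r := by
      have := ((hasDerivAt_pow 2 r).const_mul π).neg
      exact this.congr_deriv (by simp only [Nat.reduceSub, pow_one, Nat.cast_ofNat]; ring)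
    have := hinner.exp.neg
    exact this.congr_deriv (by ring)
  have key := integral_Ioi_of_hasDerivAt_of_tendsto
    (f := fun u : ℝ => -Real.exp (-(π * u ^ 2)))
    (f' := fun r : ℝ => 2 * π * r * Real.exp (-(π * r ^ 2)))
    (a := r₀) (m := 0)
    (hD r₀).continuousAt.continuousWithinAt
    (fun x _ => hD x) (intg1 r₀)
    (by simpa using tendsto_exp_neg_pi_sq.neg)
  rw [key]; ring

/-- Mean log-distance under the conditioned nearest-neighbor PDF
`f̃(r) = 2πr e^{πr₀²} e^{−πr²}` on `[r₀,∞)`, and the resulting mean log-pathloss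
`E[ln L(r)]` for `L(r) = β r^{−α}`. -/
theorem stmt_12 (r₀ α β : ℝ) (hr₀ : 0 < r₀) (hα : 2 < α) (hβ : 0 < β) :
    (∫ r in Set.Ioi r₀,
        Real.log r * (2 * π * r / Real.exp (-(π * r₀ ^ 2)) * Real.exp (-(π * r ^ 2))))
      = -(Real.exp (π * r₀ ^ 2) / 2) *
          (expInt (-(π * r₀ ^ 2)) - 2 * Real.exp (-(π * r₀ ^ 2)) * Real.log r₀) ∧
    (∫ r in Set.Ioi r₀,
        (Real.log β - α * Real.log r) *
          (2 * π * r / Real.exp (-(π * r₀ ^ 2)) * Real.exp (-(π * r ^ 2))))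
      = Real.log β + (α / 2) * Real.exp (π * r₀ ^ 2) *
          (expInt (-(π * r₀ ^ 2)) - 2 * Real.exp (-(π * r₀ ^ 2)) * Real.log r₀) := by
  have hg := intg1 r₀
  have hlg := intg2 hr₀
  have hprod : Real.exp (π * r₀ ^ 2) * Real.exp (-(π * r₀ ^ 2)) = 1 := by
    rw [← Real.exp_add]; simp
  have hEi : expInt (-(π * r₀ ^ 2)) = -∫ t in Set.Ioi (π * r₀ ^ 2), Real.exp (-t) / t := by
    rw [expInt, neg_neg]
  constructor
  · have h1 : (∫ r in Set.Ioi r₀,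
        Real.log r * (2 * π * r / Real.exp (-(π * r₀ ^ 2)) * Real.exp (-(π * r ^ 2))))
        = ∫ r in Set.Ioi r₀,
            Real.exp (π * r₀ ^ 2) * (Real.log r * (2 * π * r * Real.exp (-(π * r ^ 2)))) := by
      refine integral_congr_ae (ae_of_all _ fun r => ?_)
      simp only [Real.exp_neg, div_inv_eq_mul]; ring
    rw [h1, integral_const_mul, aux_log hr₀, hEi]
    ring
  · have h2 : (∫ r in Set.Ioi r₀,
        (Real.log β - α * Real.log r) *
          (2 * π * r / Real.exp (-(π * r₀ ^ 2)) * Real.exp (-(π * r ^ 2))))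
        = ∫ r in Set.Ioi r₀,
            ((Real.exp (π * r₀ ^ 2) * Real.log β) * (2 * π * r * Real.exp (-(π * r ^ 2)))
              - (Real.exp (π * r₀ ^ 2) * α) * (Real.log r * (2 * π * r * Real.exp (-(π * r ^ 2))))) := by
      refine integral_congr_ae (ae_of_all _ fun r => ?_)
      simp only [Real.exp_neg, div_inv_eq_mul]; ring
    rw [h2, integral_sub (hg.const_mul _) (hlg.const_mul _), integral_const_mul,
      integral_const_mul, aux_norm hr₀, aux_log hr₀, hEi]
    linear_combination Real.log β * hprod
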